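/- Theorem 1, encoder part (part-equivariance of the frame-averaged encoder): let W ∈ {0,1}^{n×k} with each row summing to 1, with columns w_j, and let φ : ℝ^{n×3} → ℝ^m × ℝ^{d×3} be an arbitrary function. For X ∈ ℝ^{n×3} define for each part j the part geometry X_j = (𝟏 − w_j) t_j(X)ᵀ + w_j ⊙ X, where t_j(X) is the w_j-weighted centroid of X, and the latent code Z_j = (1/|F_j(X)|) Σ_{g ∈ F_j(X)} ρ_Z(g) φ(ρ_X(g)⁻¹ X_j), where F_j is the w_j-weighted PCA frame (assume for each j the w_j-weighted covariance of X has three distinct eigenvalues). Then for any g₁,…,g_k ∈ E(3), the transformed input X' = Σ_{l=1}^k w_l ⊙ (ρ_X(g_l)X) has latent codes Z'_j = ρ_Z(g_j) Z_j for every j ∈ {1,…,k}. -/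
import Mathlib


open Matrix

noncomputable section

/-- The all-ones vector in `ℝⁿ`. -/
def onesVec (n : ℕ) : Fin n → ℝ := fun _ => 1

/-- Action of `g = (R, t) ∈ E(3)` on `V ∈ ℝ^{n×3}`: `ρ(g)V = V Rᵀ + 𝟏 tᵀ`. -/
def euclAct {n : ℕ} (R : Matrix (Fin 3) (Fin 3) ℝ) (t : Fin 3 → ℝ)
    (V : Matrix (Fin n) (Fin 3) ℝ) : Matrix (Fin n) (Fin 3) ℝ :=
  V * Rᵀ + Matrix.vecMulVec (onesVec n) t

/-- Inverse action: `ρ(g)⁻¹ V = (V - 𝟏 tᵀ) R`. -/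
def euclActInv {n : ℕ} (R : Matrix (Fin 3) (Fin 3) ℝ) (t : Fin 3 → ℝ)
    (V : Matrix (Fin n) (Fin 3) ℝ) : Matrix (Fin n) (Fin 3) ℝ :=
  (V - Matrix.vecMulVec (onesVec n) t) * R

/-- The weighted centroid `t(V) = (1/(𝟏ᵀw)) Vᵀ w`. -/
def centroid {n : ℕ} (w : Fin n → ℝ) (V : Matrix (Fin n) (Fin 3) ℝ) : Fin 3 → ℝ :=
  (∑ i, w i)⁻¹ • (Vᵀ.mulVec w)

/-- The weighted covariance `C(V) = (V − 𝟏 t(V)ᵀ)ᵀ diag(w) (V − 𝟏 t(V)ᵀ)`. -/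
def wcov {n : ℕ} (w : Fin n → ℝ) (V : Matrix (Fin n) (Fin 3) ℝ) :
    Matrix (Fin 3) (Fin 3) ℝ :=
  (V - Matrix.vecMulVec (onesVec n) (centroid w V))ᵀ * Matrix.diagonal w *
    (V - Matrix.vecMulVec (onesVec n) (centroid w V))

/-- `μ` is an eigenvalue of `M`. -/
def IsEigenvalue (M : Matrix (Fin 3) (Fin 3) ℝ) (μ : ℝ) : Prop :=
  ∃ v : Fin 3 → ℝ, v ≠ 0 ∧ M.mulVec v = μ • v

/-- The weighted PCA frame: pairs `(R, t(V))` where the `i`-th column of `R` is a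
unit-norm eigenvector of the weighted covariance `C(V)` for the eigenvalue `lam i`. -/
def pcaFrame {n : ℕ} (lam : Fin 3 → ℝ) (w : Fin n → ℝ) (V : Matrix (Fin n) (Fin 3) ℝ) :
    Set (Matrix (Fin 3) (Fin 3) ℝ × (Fin 3 → ℝ)) :=
  { p | p.2 = centroid w V ∧ ∀ i : Fin 3,
      (fun j => p.1 j i) ⬝ᵥ (fun j => p.1 j i) = 1 ∧
      (wcov w V).mulVec (fun j => p.1 j i) = lam i • (fun j => p.1 j i) }

/-- Row-wise scaling `(a ⊙ B)_{ij} = a_i B_{ij}`. -/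
def rowScale {n : ℕ} (a : Fin n → ℝ) (B : Matrix (Fin n) (Fin 3) ℝ) :
    Matrix (Fin n) (Fin 3) ℝ :=
  Matrix.of fun i j => a i * B i j


/-- The part geometry `X_j = (𝟏 − w_j) t_j(X)ᵀ + w_j ⊙ X`, where `w_j` is the `j`-th
column of the partitioning matrix `W` and `t_j(X)` is the `w_j`-weighted centroid. -/
def partGeom {n k : ℕ} (W : Matrix (Fin n) (Fin k) ℝ) (j : Fin k)
    (X : Matrix (Fin n) (Fin 3) ℝ) : Matrix (Fin n) (Fin 3) ℝ :=
  Matrix.vecMulVec (fun i => 1 - W i j) (centroid (fun i => W i j) X) +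
    rowScale (fun i => W i j) X

/-- Action of `g = (R,t) ∈ E(3)` on a latent code `(u,U)`: `ρ_Z(g)(u,U) = (u, U Rᵀ + 𝟏 tᵀ)`. -/
def rhoZ {m d : ℕ} (R : Matrix (Fin 3) (Fin 3) ℝ) (t : Fin 3 → ℝ)
    (Z : (Fin m → ℝ) × Matrix (Fin d) (Fin 3) ℝ) :
    (Fin m → ℝ) × Matrix (Fin d) (Fin 3) ℝ :=
  (Z.1, euclAct R t Z.2)

/-- The `j`-th latent code of the frame-averaged encoder:
`Z_j = (1/|F_j(X)|) Σ_{g ∈ F_j(X)} ρ_Z(g) φ(ρ_X(g)⁻¹ X_j)`. -/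
def encCode {n k m d : ℕ} (W : Matrix (Fin n) (Fin k) ℝ) (lam : Fin k → Fin 3 → ℝ)
    (φ : Matrix (Fin n) (Fin 3) ℝ → (Fin m → ℝ) × Matrix (Fin d) (Fin 3) ℝ)
    (X : Matrix (Fin n) (Fin 3) ℝ) (j : Fin k) :
    (Fin m → ℝ) × Matrix (Fin d) (Fin 3) ℝ :=
  (Nat.card (pcaFrame (lam j) (fun i => W i j) X) : ℝ)⁻¹ •
    ∑ᶠ p ∈ pcaFrame (lam j) (fun i => W i j) X,
      rhoZ p.1 p.2 (φ (euclActInv p.1 p.2 (partGeom W j X)))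

namespace EncAux

lemma vecMulVec_transpose' {a b : ℕ} (u : Fin a → ℝ) (v : Fin b → ℝ) :
    (Matrix.vecMulVec u v)ᵀ = Matrix.vecMulVec v u := by
  ext i j; simp [Matrix.vecMulVec_apply, mul_comm]

lemma vecMulVec_add' {a b : ℕ} (u : Fin a → ℝ) (v w : Fin b → ℝ) :
    Matrix.vecMulVec u (v + w) = Matrix.vecMulVec u v + Matrix.vecMulVec u w := by
  ext i j; simp [Matrix.vecMulVec_apply, mul_add]

lemma vecMulVec_mulVec_right {a : ℕ} (u : Fin a → ℝ) (R : Matrix (Fin 3) (Fin 3) ℝ)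
    (v : Fin 3 → ℝ) : Matrix.vecMulVec u (R.mulVec v) = Matrix.vecMulVec u v * Rᵀ := by
  ext i j
  simp [Matrix.vecMulVec_apply, Matrix.mul_apply, Matrix.mulVec, dotProduct,
    Finset.mul_sum, mul_comm, mul_left_comm]

lemma vecMulVec_mulVec {a b : ℕ} (u : Fin a → ℝ) (v w : Fin b → ℝ) :
    (Matrix.vecMulVec u v).mulVec w = (v ⬝ᵥ w) • u := by
  funext i
  simp only [Matrix.mulVec, dotProduct, Matrix.vecMulVec_apply, Pi.smul_apply,
    smul_eq_mul]
  rw [Finset.sum_mul]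
  exact Finset.sum_congr rfl fun x _ => by ring

lemma centroid_congr {n : ℕ} (w : Fin n → ℝ) {V V' : Matrix (Fin n) (Fin 3) ℝ}
    (h : ∀ i, w i ≠ 0 → V i = V' i) : centroid w V = centroid w V' := by
  unfold centroid
  congr 1
  funext c
  simp only [Matrix.mulVec, dotProduct, Matrix.transpose_apply]
  refine Finset.sum_congr rfl fun i _ => ?_
  by_cases hi : w i = 0
  · simp [hi]
  · rw [h i hi]

lemma wcov_entry {n : ℕ} (w : Fin n → ℝ) (A B : Matrix (Fin n) (Fin 3) ℝ) (a b : Fin 3) :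
    (Aᵀ * Matrix.diagonal w * B) a b = ∑ i, A i a * w i * B i b := by
  rw [Matrix.mul_apply]
  refine Finset.sum_congr rfl fun i _ => ?_
  rw [Matrix.mul_diagonal, Matrix.transpose_apply]

lemma wcov_congr {n : ℕ} (w : Fin n → ℝ) {V V' : Matrix (Fin n) (Fin 3) ℝ}
    (h : ∀ i, w i ≠ 0 → V i = V' i) : wcov w V = wcov w V' := by
  unfold wcov
  rw [centroid_congr w h]
  ext a b
  rw [wcov_entry, wcov_entry]
  refine Finset.sum_congr rfl fun i _ => ?_
  by_cases hi : w i = 0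
  · simp [hi]
  · simp only [Matrix.sub_apply]
    rw [show V i a = V' i a from congrFun (h i hi) a, show V i b = V' i b from congrFun (h i hi) b]

lemma centroid_euclAct {n : ℕ} (w : Fin n → ℝ) (hw : (∑ i, w i) ≠ 0)
    (R : Matrix (Fin 3) (Fin 3) ℝ) (t : Fin 3 → ℝ) (V : Matrix (Fin n) (Fin 3) ℝ) :
    centroid w (euclAct R t V) = R.mulVec (centroid w V) + t := by
  unfold centroid euclAct
  have h1 : (V * Rᵀ + Matrix.vecMulVec (onesVec n) t)ᵀ
      = R * Vᵀ + Matrix.vecMulVec t (onesVec n) := by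
    rw [Matrix.transpose_add, Matrix.transpose_mul, Matrix.transpose_transpose,
      vecMulVec_transpose']
  rw [h1, Matrix.add_mulVec, ← Matrix.mulVec_mulVec, vecMulVec_mulVec]
  have h2 : (onesVec n ⬝ᵥ w) = ∑ i, w i := by simp [onesVec, dotProduct]
  rw [h2, smul_add, Matrix.mulVec_smul, smul_smul, inv_mul_cancel₀ hw, one_smul]

lemma sub_centroid_euclAct {n : ℕ} (w : Fin n → ℝ) (hw : (∑ i, w i) ≠ 0)
    (R : Matrix (Fin 3) (Fin 3) ℝ) (t : Fin 3 → ℝ) (V : Matrix (Fin n) (Fin 3) ℝ) :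
    euclAct R t V - Matrix.vecMulVec (onesVec n) (centroid w (euclAct R t V)) =
      (V - Matrix.vecMulVec (onesVec n) (centroid w V)) * Rᵀ := by
  rw [centroid_euclAct w hw, vecMulVec_add', vecMulVec_mulVec_right, Matrix.sub_mul]
  unfold euclAct
  abel

lemma wcov_euclAct {n : ℕ} (w : Fin n → ℝ) (hw : (∑ i, w i) ≠ 0)
    (R : Matrix (Fin 3) (Fin 3) ℝ) (t : Fin 3 → ℝ) (V : Matrix (Fin n) (Fin 3) ℝ) :
    wcov w (euclAct R t V) = R * wcov w V * Rᵀ := by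
  unfold wcov
  rw [sub_centroid_euclAct w hw, Matrix.transpose_mul, Matrix.transpose_transpose]
  simp only [Matrix.mul_assoc]



lemma vecMulVec_neg' {a b : ℕ} (u : Fin a → ℝ) (v : Fin b → ℝ) :
    Matrix.vecMulVec u (-v) = -Matrix.vecMulVec u v := by
  ext i j; simp [Matrix.vecMulVec_apply]

lemma euclAct_inv_cancel {n : ℕ} (R : Matrix (Fin 3) (Fin 3) ℝ) (τ : Fin 3 → ℝ)
    (hR : Rᵀ * R = 1) (V : Matrix (Fin n) (Fin 3) ℝ) :
    euclAct Rᵀ (-(Rᵀ.mulVec τ)) (euclAct R τ V) = V := by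
  unfold euclAct
  rw [Matrix.transpose_transpose, Matrix.add_mul, Matrix.mul_assoc, hR, Matrix.mul_one,
    vecMulVec_neg',
    show Matrix.vecMulVec (onesVec n) τ * R = Matrix.vecMulVec (onesVec n) (Rᵀ.mulVec τ) by
      rw [vecMulVec_mulVec_right, Matrix.transpose_transpose]]
  abel

lemma pcaFrame_image_subset {n : ℕ} (lam : Fin 3 → ℝ) (w : Fin n → ℝ) (hw : (∑ i, w i) ≠ 0)
    (R : Matrix (Fin 3) (Fin 3) ℝ) (τ : Fin 3 → ℝ) (hR : Rᵀ * R = 1)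
    (V : Matrix (Fin n) (Fin 3) ℝ) :
    (fun p : Matrix (Fin 3) (Fin 3) ℝ × (Fin 3 → ℝ) => (R * p.1, R.mulVec p.2 + τ)) ''
      pcaFrame lam w V ⊆ pcaFrame lam w (euclAct R τ V) := by
  rintro _ ⟨p, ⟨hp2, hpcol⟩, rfl⟩
  constructor
  · show R.mulVec p.2 + τ = _
    rw [centroid_euclAct w hw, hp2]
  · intro i
    have hcol : (fun a => (R * p.1) a i) = R.mulVec (fun a => p.1 a i) := by
      funext a; simp [Matrix.mul_apply, Matrix.mulVec, dotProduct]
    obtain ⟨h1, h2⟩ := hpcol i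
    refine ⟨?_, ?_⟩
    · show (fun a => (R * p.1) a i) ⬝ᵥ (fun a => (R * p.1) a i) = 1
      rw [hcol, Matrix.dotProduct_mulVec, ← Matrix.mulVec_transpose, Matrix.mulVec_mulVec,
        hR, Matrix.one_mulVec, h1]
    · show (wcov w (euclAct R τ V)).mulVec (fun a => (R * p.1) a i)
        = lam i • (fun a => (R * p.1) a i)
      rw [wcov_euclAct w hw, hcol]
      calc (R * wcov w V * Rᵀ).mulVec (R.mulVec fun a => p.1 a i)
          = (R * wcov w V * Rᵀ * R).mulVec (fun a => p.1 a i) := by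
            rw [Matrix.mulVec_mulVec]
        _ = (R * wcov w V).mulVec (fun a => p.1 a i) := by
            rw [Matrix.mul_assoc (R * wcov w V), hR, Matrix.mul_one]
        _ = R.mulVec ((wcov w V).mulVec (fun a => p.1 a i)) := by
            rw [← Matrix.mulVec_mulVec]
        _ = R.mulVec (lam i • fun a => p.1 a i) := by rw [h2]
        _ = lam i • R.mulVec (fun a => p.1 a i) := Matrix.mulVec_smul _ _ _

lemma pcaFrame_euclAct {n : ℕ} (lam : Fin 3 → ℝ) (w : Fin n → ℝ) (hw : (∑ i, w i) ≠ 0)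
    (R : Matrix (Fin 3) (Fin 3) ℝ) (τ : Fin 3 → ℝ) (hR : R * Rᵀ = 1)
    (V : Matrix (Fin n) (Fin 3) ℝ) :
    pcaFrame lam w (euclAct R τ V) =
      (fun p : Matrix (Fin 3) (Fin 3) ℝ × (Fin 3 → ℝ) => (R * p.1, R.mulVec p.2 + τ)) ''
        pcaFrame lam w V := by
  have hR' : Rᵀ * R = 1 := mul_eq_one_comm.mp hR
  apply Set.Subset.antisymm
  · intro q hq
    have h := pcaFrame_image_subset lam w hw Rᵀ (-(Rᵀ.mulVec τ))
      (by rwa [Matrix.transpose_transpose]) (euclAct R τ V)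
    have hmem := h ⟨q, hq, rfl⟩
    rw [euclAct_inv_cancel R τ hR' V] at hmem
    refine ⟨(Rᵀ * q.1, Rᵀ.mulVec q.2 + -(Rᵀ.mulVec τ)), hmem, ?_⟩
    refine Prod.ext ?_ ?_
    · show R * (Rᵀ * q.1) = q.1
      rw [← Matrix.mul_assoc, hR, Matrix.one_mul]
    · show R.mulVec (Rᵀ.mulVec q.2 + -(Rᵀ.mulVec τ)) + τ = q.2
      rw [Matrix.mulVec_add, Matrix.mulVec_neg, Matrix.mulVec_mulVec, Matrix.mulVec_mulVec,
        hR, Matrix.one_mulVec, Matrix.one_mulVec]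
      abel
  · exact pcaFrame_image_subset lam w hw R τ hR' V

lemma euclActInv_comp {n : ℕ} (R P : Matrix (Fin 3) (Fin 3) ℝ) (τ s : Fin 3 → ℝ)
    (hR : Rᵀ * R = 1) (Y : Matrix (Fin n) (Fin 3) ℝ) :
    euclActInv (R * P) (R.mulVec s + τ) (euclAct R τ Y) = euclActInv P s Y := by
  unfold euclActInv euclAct
  have h : Y * Rᵀ + Matrix.vecMulVec (onesVec n) τ
      - Matrix.vecMulVec (onesVec n) (R.mulVec s + τ)
      = (Y - Matrix.vecMulVec (onesVec n) s) * Rᵀ := by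
    rw [vecMulVec_add', vecMulVec_mulVec_right, Matrix.sub_mul]; abel
  rw [h, Matrix.mul_assoc, ← Matrix.mul_assoc Rᵀ R P, hR, Matrix.one_mul]

lemma rhoZ_comp {m d : ℕ} (R P : Matrix (Fin 3) (Fin 3) ℝ) (τ s : Fin 3 → ℝ)
    (Z : (Fin m → ℝ) × Matrix (Fin d) (Fin 3) ℝ) :
    rhoZ (R * P) (R.mulVec s + τ) Z = rhoZ R τ (rhoZ P s Z) := by
  unfold rhoZ euclAct
  refine Prod.ext rfl ?_
  show Z.2 * (R * P)ᵀ + _ = (Z.2 * Pᵀ + _) * Rᵀ + _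
  rw [Matrix.transpose_mul, vecMulVec_add', vecMulVec_mulVec_right, Matrix.add_mul,
    ← Matrix.mul_assoc]
  abel


lemma eig_sign (C : Matrix (Fin 3) (Fin 3) ℝ) (lam : Fin 3 → ℝ)
    (hinj : Function.Injective lam)
    (e : Fin 3 → (Fin 3 → ℝ)) (he1 : ∀ i, e i ⬝ᵥ e i = 1)
    (he2 : ∀ i, C.mulVec (e i) = lam i • e i)
    {i : Fin 3} {u : Fin 3 → ℝ} (hu1 : u ⬝ᵥ u = 1) (hu2 : C.mulVec u = lam i • u) :
    u = e i ∨ u = -e i := by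
  have hne : ∀ i', e i' ≠ 0 := by
    intro i' h
    have := he1 i'
    rw [h] at this
    simp [dotProduct] at this
  have hev : ∀ i', Module.End.HasEigenvector (Matrix.mulVecLin C) (lam i') (e i') := fun i' =>
    ⟨Module.End.mem_eigenspace_iff.2 (by simpa using he2 i'), hne i'⟩
  have hli : LinearIndependent ℝ e :=
    Module.End.eigenvectors_linearIndependent' (Matrix.mulVecLin C) lam hinj e hev
  have hcard : Fintype.card (Fin 3) = Module.finrank ℝ (Fin 3 → ℝ) := by simp
  let B := basisOfLinearIndependentOfCardEqFinrank hli hcard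
  have hB : ⇑B = e := coe_basisOfLinearIndependentOfCardEqFinrank hli hcard
  set c : Fin 3 → ℝ := fun i' => B.repr u i' with hc
  have hrep : ∑ i', c i' • e i' = u := by
    conv_rhs => rw [← B.sum_repr u]
    rw [hB]
  have hCu : lam i • u = ∑ i', (lam i' * c i') • e i' := by
    rw [← hu2]
    conv_lhs => rw [← hrep]
    rw [show C.mulVec (∑ i', c i' • e i') = ∑ i', c i' • C.mulVec (e i') by
      rw [← Matrix.mulVecLin_apply, map_sum]
      exact Finset.sum_congr rfl fun i' _ => by
        rw [LinearMap.map_smul, Matrix.mulVecLin_apply]]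
    exact Finset.sum_congr rfl fun i' _ => by rw [he2 i', smul_smul, mul_comm]
  have hCu' : lam i • u = ∑ i', (lam i * c i') • e i' := by
    conv_lhs => rw [← hrep]
    rw [Finset.smul_sum]
    exact Finset.sum_congr rfl fun i' _ => by rw [smul_smul]
  have hzero : ∑ i', ((lam i - lam i') * c i') • e i' = 0 := by
    have h := hCu'.symm.trans hCu
    rw [← sub_eq_zero] at h
    rw [← h, ← Finset.sum_sub_distrib]
    exact Finset.sum_congr rfl fun i' _ => by rw [← sub_smul]; ring_nf
  have hz := Fintype.linearIndependent_iff.1 hli _ hzero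
  have hcz : ∀ i', i' ≠ i → c i' = 0 := by
    intro i' hi'
    have := hz i'
    rcases mul_eq_zero.1 this with h | h
    · exact absurd (hinj (by linarith [sub_eq_zero.1 h])) (Ne.symm hi')
    · exact h
  have hu : u = c i • e i := by
    rw [← hrep, Finset.sum_eq_single i (fun i' _ hi' => by rw [hcz i' hi', zero_smul])
      (by simp)]
  have h1 : c i * c i = 1 := by
    have := hu1
    rw [hu, smul_dotProduct, dotProduct_smul, he1 i] at this
    simpa using this
  rcases mul_self_eq_one_iff.1 h1 with h | h
  · left; rw [hu, h, one_smul]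
  · right; rw [hu, h, neg_one_smul]

lemma rowScale_add {n : ℕ} (w : Fin n → ℝ) (A B : Matrix (Fin n) (Fin 3) ℝ) :
    rowScale w (A + B) = rowScale w A + rowScale w B := by
  ext i j; simp [rowScale, mul_add]

lemma rowScale_mul {n : ℕ} (w : Fin n → ℝ) (A : Matrix (Fin n) (Fin 3) ℝ)
    (P : Matrix (Fin 3) (Fin 3) ℝ) :
    rowScale w (A * P) = rowScale w A * P := by
  ext i j
  simp [rowScale, Matrix.mul_apply, Finset.mul_sum, mul_assoc]

lemma rowScale_vecMulVec {n : ℕ} (w u : Fin n → ℝ) (τ : Fin 3 → ℝ) :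
    rowScale w (Matrix.vecMulVec u τ) = Matrix.vecMulVec (fun i => w i * u i) τ := by
  ext i j; simp [rowScale, Matrix.vecMulVec_apply, mul_assoc]

lemma smul_finsum_rhoZ {α : Type*} {m d : ℕ} (S : Set α) (hS : S.Finite) (hne : S.Nonempty)
    (R : Matrix (Fin 3) (Fin 3) ℝ) (τ : Fin 3 → ℝ)
    (A : α → (Fin m → ℝ) × Matrix (Fin d) (Fin 3) ℝ) :
    (Nat.card S : ℝ)⁻¹ • ∑ᶠ p ∈ S, rhoZ R τ (A p) =
      rhoZ R τ ((Nat.card S : ℝ)⁻¹ • ∑ᶠ p ∈ S, A p) := by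
  classical
  have hsS : (hS.toFinset : Set α) = S := hS.coe_toFinset
  rw [Nat.card_eq_card_finite_toFinset hS, finsum_mem_eq_finite_toFinset_sum _ hS,
    finsum_mem_eq_finite_toFinset_sum _ hS]
  set s := hS.toFinset with hs
  have hs0 : (s.card : ℝ) ≠ 0 := by
    obtain ⟨x, hx⟩ := hne
    exact_mod_cast Finset.card_ne_zero_of_mem (hS.mem_toFinset.2 hx)
  refine Prod.ext ?_ ?_
  · simp [rhoZ, Prod.fst_sum]
  · show (s.card : ℝ)⁻¹ • (∑ p ∈ s, rhoZ R τ (A p)).2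
      = euclAct R τ (((s.card : ℝ)⁻¹ • ∑ p ∈ s, A p).2)
    simp only [Prod.smul_snd, Prod.snd_sum, rhoZ]
    unfold euclAct
    rw [Finset.sum_add_distrib, ← Matrix.sum_mul, Finset.sum_const, smul_add]
    congr 1
    · rw [Matrix.smul_mul]
    · rw [← Nat.cast_smul_eq_nsmul ℝ, smul_smul, inv_mul_cancel₀ hs0, one_smul]


lemma pcaFrame_finite_nonempty {n : ℕ} (lam : Fin 3 → ℝ) (hinj : Function.Injective lam)
    (w : Fin n → ℝ) (X : Matrix (Fin n) (Fin 3) ℝ)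
    (heig : ∀ i : Fin 3, ∃ v : Fin 3 → ℝ, v ≠ 0 ∧ (wcov w X).mulVec v = lam i • v) :
    (pcaFrame lam w X).Finite ∧ (pcaFrame lam w X).Nonempty := by
  classical
  have hunit : ∀ i : Fin 3, ∃ u : Fin 3 → ℝ, u ⬝ᵥ u = 1 ∧
      (wcov w X).mulVec u = lam i • u := by
    intro i
    obtain ⟨v, hv0, hvE⟩ := heig i
    have hpos : 0 < v ⬝ᵥ v := by
      rcases lt_or_eq_of_le (Finset.sum_nonneg fun a _ => mul_self_nonneg (v a)) with h | h
      · exact h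
      · exact absurd (dotProduct_self_eq_zero.1 h.symm) hv0
    set r := Real.sqrt (v ⬝ᵥ v) with hrdef
    have hrr : r * r = v ⬝ᵥ v := Real.mul_self_sqrt hpos.le
    have hrne : r ≠ 0 := ne_of_gt (Real.sqrt_pos.2 hpos)
    refine ⟨r⁻¹ • v, ?_, ?_⟩
    · rw [smul_dotProduct, dotProduct_smul, smul_eq_mul, smul_eq_mul, ← hrr]
      field_simp
    · rw [Matrix.mulVec_smul, hvE, smul_comm]
  choose e he1 he2 using hunit
  constructor
  · apply Set.Finite.subset (Set.finite_range
      (fun σ : Fin 3 → Bool => ((Matrix.of fun a i => if σ i then e i a else -(e i a)),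
        centroid w X)))
    rintro q ⟨hq2, hqcol⟩
    refine ⟨fun i => decide ((fun a => q.1 a i) = e i), ?_⟩
    refine Prod.ext ?_ hq2.symm
    show (Matrix.of fun a i => if decide ((fun a => q.1 a i) = e i) then e i a
      else -(e i a)) = q.1
    ext a i
    simp only [Matrix.of_apply]
    rcases eig_sign (wcov w X) lam hinj e he1 he2 (hqcol i).1 (hqcol i).2 with h | h
    · rw [if_pos (decide_eq_true h)]
      exact (congrFun h a).symm
    · have hfalse : ¬((fun a => q.1 a i) = e i) := by
        intro h'
        have h3 : e i = -e i := h'.symm.trans h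
        rw [eq_neg_iff_add_eq_zero] at h3
        have h4 : (2 : ℝ) • e i = 0 := by rw [two_smul]; exact h3
        rcases smul_eq_zero.1 h4 with h5 | h5
        · norm_num at h5
        · have h6 := he1 i
          rw [h5] at h6
          simp [dotProduct] at h6
      rw [if_neg (by simpa using hfalse)]
      exact (congrFun h a).symm
  · refine ⟨(Matrix.of fun a i => e i a, centroid w X), rfl, fun i => ⟨?_, ?_⟩⟩
    · exact he1 i
    · exact he2 i

end EncAux

open EncAux

/-- **Theorem 1, encoder part** (part-equivariance of the frame-averaged encoder):
for hard weights `W ∈ {0,1}^{n×k}` with rows summing to `1` and an arbitrary backbone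
`φ`, transforming the `j`-th part of the input by `g_j ∈ E(3)` transforms the `j`-th
latent code by `ρ_Z(g_j)`. -/
theorem encoder_part_equivariant {n k m d : ℕ}
    (W : Matrix (Fin n) (Fin k) ℝ)
    (hW01 : ∀ i j, W i j = 0 ∨ W i j = 1)
    (hWrow : ∀ i, ∑ j, W i j = 1)
    (hWcol : ∀ j, 0 < ∑ i, W i j)
    (φ : Matrix (Fin n) (Fin 3) ℝ → (Fin m → ℝ) × Matrix (Fin d) (Fin 3) ℝ)
    (X : Matrix (Fin n) (Fin 3) ℝ)
    (lam : Fin k → Fin 3 → ℝ)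
    (hmono : ∀ j, StrictMono (lam j))
    (heig : ∀ j i, IsEigenvalue (wcov (fun i' => W i' j) X) (lam j i))
    (g : Fin k → Matrix (Fin 3) (Fin 3) ℝ × (Fin 3 → ℝ))
    (hg : ∀ l, (g l).1 * (g l).1ᵀ = 1) :
    ∀ j : Fin k,
      encCode W lam φ (∑ l, rowScale (fun i => W i l) (euclAct (g l).1 (g l).2 X)) j =
        rhoZ (g j).1 (g j).2 (encCode W lam φ X j) := by
  intro j
  have hw : (∑ i, (fun i' => W i' j) i) ≠ 0 := ne_of_gt (hWcol j)
  set R := (g j).1 with hRdef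
  set τ := (g j).2 with hτdef
  have hRR : R * Rᵀ = 1 := hg j
  have hRtR : Rᵀ * R = 1 := mul_eq_one_comm.mp hRR
  set X' := ∑ l, rowScale (fun i => W i l) (euclAct (g l).1 (g l).2 X) with hX'def
  have hrows : ∀ i, (fun i' => W i' j) i ≠ 0 → X' i = (euclAct R τ X) i := by
    intro i hi
    have hij : W i j = 1 := (hW01 i j).resolve_left hi
    have hzero : ∀ l, l ≠ j → W i l = 0 := by
      intro l hl
      have hsum : ∑ l' ∈ Finset.univ.erase j, W i l' = 0 := by
        have h := hWrow i
        rw [← Finset.add_sum_erase _ _ (Finset.mem_univ j), hij] at h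
        linarith
      have hnn : ∀ l' ∈ Finset.univ.erase j, 0 ≤ W i l' := by
        intro l' _; rcases hW01 i l' with h | h <;> rw [h] <;> norm_num
      exact (Finset.sum_eq_zero_iff_of_nonneg hnn).1 hsum l
        (Finset.mem_erase.2 ⟨hl, Finset.mem_univ l⟩)
    funext cc
    have hXi : X' i cc = ∑ l, W i l * euclAct (g l).1 (g l).2 X i cc := by
      rw [hX'def]
      simp [Matrix.sum_apply, rowScale]
    rw [hXi, Finset.sum_eq_single j (fun l _ hl => by rw [hzero l hl, zero_mul])
      (fun h => absurd (Finset.mem_univ j) h), hij, one_mul]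
  have hframeX' : pcaFrame (lam j) (fun i => W i j) X'
      = pcaFrame (lam j) (fun i => W i j) (euclAct R τ X) := by
    unfold pcaFrame
    rw [centroid_congr _ hrows, wcov_congr _ hrows]
  have hframe : pcaFrame (lam j) (fun i => W i j) (euclAct R τ X)
      = (fun p : Matrix (Fin 3) (Fin 3) ℝ × (Fin 3 → ℝ) =>
          (R * p.1, R.mulVec p.2 + τ)) '' pcaFrame (lam j) (fun i => W i j) X :=
    pcaFrame_euclAct (lam j) _ hw R τ hRR X
  have hcent : centroid (fun i => W i j) X'
      = R.mulVec (centroid (fun i => W i j) X) + τ := by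
    rw [centroid_congr _ hrows, centroid_euclAct _ hw]
  have hpart : partGeom W j X' = euclAct R τ (partGeom W j X) := by
    have hrs : rowScale (fun i => W i j) X' = rowScale (fun i => W i j) (euclAct R τ X) := by
      ext i cc
      simp only [rowScale, Matrix.of_apply]
      by_cases hi : W i j = 0
      · rw [hi, zero_mul, zero_mul]
      · rw [congrFun (hrows i hi) cc]
    unfold partGeom
    rw [hrs, hcent, vecMulVec_add', vecMulVec_mulVec_right]
    unfold euclAct
    rw [rowScale_add, rowScale_mul, rowScale_vecMulVec, Matrix.add_mul]
    ext i cc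
    simp only [Matrix.add_apply, Matrix.vecMulVec_apply, onesVec]
    ring
  obtain ⟨hfin, hne⟩ := pcaFrame_finite_nonempty (lam j) (hmono j).injective
    (fun i => W i j) X (fun i => heig j i)
  have hTinj : Function.Injective (fun p : Matrix (Fin 3) (Fin 3) ℝ × (Fin 3 → ℝ) =>
      (R * p.1, R.mulVec p.2 + τ)) := by
    intro p q hpq
    simp only [Prod.mk.injEq] at hpq
    obtain ⟨h1, h2⟩ := hpq
    have hp1 : p.1 = q.1 := by
      have h := congrArg (fun M => Rᵀ * M) h1
      simpa [← Matrix.mul_assoc, hRtR] using h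
    have hp2 : p.2 = q.2 := by
      have h3 : R.mulVec p.2 = R.mulVec q.2 := by
        have h := congrArg (fun v => v - τ) h2
        simpa using h
      have h4 := congrArg (fun v => Rᵀ.mulVec v) h3
      simpa [Matrix.mulVec_mulVec, hRtR, Matrix.one_mulVec] using h4
    exact Prod.ext hp1 hp2
  unfold encCode
  rw [hpart, hframeX'.trans hframe, Nat.card_image_of_injective hTinj,
    finsum_mem_image hTinj.injOn]
  have hbody : ∀ p ∈ pcaFrame (lam j) (fun i => W i j) X,
      rhoZ (R * p.1) (R.mulVec p.2 + τ) (φ (euclActInv (R * p.1) (R.mulVec p.2 + τ)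
        (euclAct R τ (partGeom W j X)))) =
      rhoZ R τ (rhoZ p.1 p.2 (φ (euclActInv p.1 p.2 (partGeom W j X)))) := by
    intro p _
    rw [euclActInv_comp _ _ _ _ hRtR, rhoZ_comp]
  rw [finsum_mem_congr rfl hbody]
  exact smul_finsum_rhoZ _ hfin hne R τ _

end
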